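/- Let X be a binomial random variable with parameters k and p, where 0 < p < 1/2. Then Pr(X ≥ k/2) ≤ ((1-p)/(1-2p)) · Pr(X = ⌈k/2⌉). -/

import Mathlib

/-- Point probability of a Binomial(k,p) random variable at j. -/
def binomP (k : ℕ) (p : ℝ) (j : ℕ) : ℝ := (k.choose j : ℝ) * p ^ j * (1 - p) ^ (k - j)

lemma binomP_nonneg (k : ℕ) (p : ℝ) (hp0 : 0 ≤ p) (hp1 : p ≤ 1) (j : ℕ) :
    0 ≤ binomP k p j := by
  unfold binomP
  have : (0:ℝ) ≤ 1 - p := by linarith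
  have : (0:ℝ) ≤ (1-p)^(k-j) := pow_nonneg this _
  have : (0:ℝ) ≤ p ^ j := pow_nonneg hp0 _
  positivity

lemma binomP_step (k : ℕ) (p : ℝ) (hp0 : 0 < p) (hp : p < 1/2) {j : ℕ}
    (hkj : k ≤ 2*j) (hjk : j < k) :
    binomP k p (j+1) ≤ (p / (1-p)) * binomP k p j := by
  have h1p : (0:ℝ) < 1 - p := by linarith
  have hch : k.choose (j+1) ≤ k.choose j := by
    have := Nat.choose_succ_right_eq k j
    have h2 : k - j ≤ j + 1 := by omega
    have : k.choose (j+1) * (j+1) ≤ k.choose j * (j+1) := by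
      rw [this]; exact Nat.mul_le_mul_left _ h2
    exact Nat.le_of_mul_le_mul_right this (Nat.succ_pos j)
  have hkj1 : k - (j+1) + 1 = k - j := by omega
  rw [div_mul_eq_mul_div, le_div_iff₀ h1p]
  unfold binomP
  have : (k.choose (j+1) : ℝ) * p ^ (j+1) * (1-p) ^ (k-(j+1)) * (1-p)
      = (k.choose (j+1) : ℝ) * p ^ (j+1) * (1-p) ^ (k-j) := by
    rw [mul_assoc, ← pow_succ, hkj1]
  rw [this]
  have hc : (k.choose (j+1) : ℝ) ≤ k.choose j := Nat.cast_le.mpr hch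
  have : p * ((k.choose j : ℝ) * p ^ j * (1-p) ^ (k-j))
      = (k.choose j : ℝ) * p ^ (j+1) * (1-p) ^ (k-j) := by ring
  rw [this]
  have hpj : (0:ℝ) ≤ p ^ (j+1) * (1-p) ^ (k-j) := by positivity
  calc (k.choose (j+1) : ℝ) * p ^ (j+1) * (1-p) ^ (k-j)
      = (k.choose (j+1) : ℝ) * (p ^ (j+1) * (1-p) ^ (k-j)) := by ring
    _ ≤ (k.choose j : ℝ) * (p ^ (j+1) * (1-p) ^ (k-j)) := mul_le_mul_of_nonneg_right hc hpj
    _ = (k.choose j : ℝ) * p ^ (j+1) * (1-p) ^ (k-j) := by ring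

lemma binomP_decay (k : ℕ) (p : ℝ) (hp0 : 0 < p) (hp : p < 1/2) {m : ℕ}
    (hkm : k ≤ 2*m) : ∀ i, m + i ≤ k →
    binomP k p (m+i) ≤ binomP k p m * (p/(1-p))^i := by
  have h1p : (0:ℝ) < 1 - p := by linarith
  have hr0 : (0:ℝ) ≤ p/(1-p) := by positivity
  intro i
  induction i with
  | zero => intro _; simp
  | succ n ih =>
    intro h
    have hjk : m + n < k := by omega
    have hstep := binomP_step k p hp0 hp (j := m + n) (by omega) hjk
    have hn := ih (by omega)
    calc binomP k p (m + (n+1)) = binomP k p ((m+n)+1) := by ring_nf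
      _ ≤ (p/(1-p)) * binomP k p (m+n) := hstep
      _ ≤ (p/(1-p)) * (binomP k p m * (p/(1-p))^n) :=
          mul_le_mul_of_nonneg_left hn hr0
      _ = binomP k p m * (p/(1-p))^(n+1) := by ring

/-- For X ~ Bin(k,p) with 0 < p < 1/2,
    Pr(X ≥ k/2) ≤ ((1-p)/(1-2p)) · Pr(X = ⌈k/2⌉). -/
theorem stmt_0 (k : ℕ) (p : ℝ) (hp0 : 0 < p) (hp : p < 1/2) :
    ∑ j ∈ (Finset.range (k+1)).filter (fun j => k ≤ 2*j), binomP k p j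
      ≤ ((1 - p)/(1 - 2*p)) * binomP k p ((k+1)/2) := by
  set m := (k+1)/2 with hm
  have h1p : (0:ℝ) < 1 - p := by linarith
  have h12p : (0:ℝ) < 1 - 2*p := by linarith
  have hr0 : (0:ℝ) ≤ p/(1-p) := by positivity
  have hr1 : p/(1-p) < 1 := by rw [div_lt_one h1p]; linarith
  have hkm : k ≤ 2*m := by omega
  have hmk : m ≤ k + 1 := by omega
  have hset : (Finset.range (k+1)).filter (fun j => k ≤ 2*j) = Finset.Ico m (k+1) := by
    ext j
    simp only [Finset.mem_filter, Finset.mem_range, Finset.mem_Ico]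
    omega
  rw [hset, Finset.sum_Ico_eq_sum_range]
  have hb0 : 0 ≤ binomP k p m := binomP_nonneg k p hp0.le (by linarith) m
  calc ∑ i ∈ Finset.range (k+1-m), binomP k p (m+i)
      ≤ ∑ i ∈ Finset.range (k+1-m), binomP k p m * (p/(1-p))^i := by
        apply Finset.sum_le_sum
        intro i hi
        exact binomP_decay k p hp0 hp hkm i (by simp [Finset.mem_range] at hi; omega)
    _ = binomP k p m * ∑ i ∈ Finset.range (k+1-m), (p/(1-p))^i := by
        rw [Finset.mul_sum]
    _ ≤ binomP k p m * (1 - p/(1-p))⁻¹ := by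
        apply mul_le_mul_of_nonneg_left _ hb0
        set r := p/(1-p) with hrdef
        have hrne : r ≠ 1 := ne_of_lt hr1
        have hlt : (0:ℝ) < 1 - r := by linarith
        rw [geom_sum_eq hrne]
        have hrn : (0:ℝ) ≤ r^(k+1-m) := pow_nonneg hr0 _
        rw [div_le_iff_of_neg (by linarith : r - 1 < 0)]
        rw [inv_mul_eq_div, div_le_iff₀ hlt]
        nlinarith
    _ = ((1 - p)/(1 - 2*p)) * binomP k p m := by
        rw [mul_comm]
        congr 1
        rw [eq_div_iff (ne_of_gt h12p), inv_mul_eq_div, div_eq_iff (by rw [sub_ne_zero]; exact (ne_of_lt hr1).symm : 1 - p/(1-p) ≠ 0)]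
        field_simp
        ring
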